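/- Two pointed full-dimensional closed convex cones A, B ⊆ ℝ³ with the same apex o satisfy: if the intersection of their boundaries ∂A ∩ ∂B is contained in {o}, then A ⊆ B or B ⊆ A or A ∩ B = {o}. -/

import Mathlib

open Set Metric Bornology Pointwise Filter Topology Module
open scoped RealInnerProductSpace
local notation "E3" => EuclideanSpace ℝ (Fin 3)

lemma exists_frontier_crossing {B : Set (EuclideanSpace ℝ (Fin 3))} (hB : IsClosed B) {a w : E3}
    (ha : a ∉ B) (hw : w ∈ B) :
    ∃ t : ℝ, t ∈ Set.Ioc (0:ℝ) 1 ∧ a + t • (w - a) ∈ frontier B := by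
  set g : ℝ → E3 := fun t => a + t • (w - a) with hg
  have hgc : Continuous g := by fun_prop
  set T : Set ℝ := Icc 0 1 ∩ g ⁻¹' B with hT
  have hTc : IsClosed T := isClosed_Icc.inter (hB.preimage hgc)
  have hT1 : (1:ℝ) ∈ T := ⟨⟨zero_le_one, le_rfl⟩, by simp [hg, hw]⟩
  have hTne : T.Nonempty := ⟨1, hT1⟩
  have hbdd : BddBelow T := ⟨0, fun t ht => ht.1.1⟩
  set t₀ := sInf T with ht₀
  have ht₀T : t₀ ∈ T := hTc.csInf_mem hTne hbdd
  have ht₀pos : 0 < t₀ := by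
    rcases ht₀T.1.1.lt_or_eq with h | h
    · exact h
    · exfalso; apply ha; have := ht₀T.2; rw [← h] at this; simpa [hg] using this
  refine ⟨t₀, ⟨ht₀pos, ht₀T.1.2⟩, ?_⟩
  rw [frontier_eq_closure_inter_closure]
  refine ⟨subset_closure ht₀T.2, ?_⟩
  have hu : Tendsto (fun n : ℕ => t₀ - t₀ / n) atTop (𝓝 t₀) := by
    have := tendsto_const_div_atTop_nhds_zero_nat t₀
    simpa using tendsto_const_nhds.sub this
  have hgu : Tendsto (fun n : ℕ => g (t₀ - t₀ / n)) atTop (𝓝 (g t₀)) := (hgc.tendsto _).comp hu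
  apply mem_closure_of_tendsto hgu
  filter_upwards [eventually_ge_atTop 1] with n hn
  have hn' : (1:ℝ) ≤ n := by exact_mod_cast hn
  have h1 : 0 < t₀ / n := div_pos ht₀pos (by linarith)
  have h2 : t₀ / n ≤ t₀ := by
    rw [div_le_iff₀ (by linarith : (0:ℝ) < n)]
    nlinarith
  have hlt : t₀ - t₀ / n < t₀ := by linarith
  have hnotT : t₀ - t₀ / n ∉ T := notMem_of_lt_csInf hlt hbdd
  have : t₀ - t₀ / n ∈ Icc (0:ℝ) 1 := ⟨by linarith, by linarith [ht₀T.1.2]⟩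
  intro hmem
  exact hnotT ⟨this, hmem⟩


structure MyCone0 (C : Set (EuclideanSpace ℝ (Fin 3))) : Prop where
  closed : IsClosed C
  conv : Convex ℝ C
  int_ne : (interior C).Nonempty
  smul_mem : ∀ x ∈ C, ∀ t : ℝ, 0 ≤ t → t • x ∈ C
  pointed : ∀ x ∈ C, -x ∈ C → x = 0

namespace MyCone0
variable {C : Set (EuclideanSpace ℝ (Fin 3))}

lemma zero_mem (hC : MyCone0 C) : (0 : E3) ∈ C := by
  obtain ⟨x, hx⟩ := hC.int_ne
  simpa using hC.smul_mem x (interior_subset hx) 0 le_rfl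

lemma zero_not_mem_interior (hC : MyCone0 C) : (0 : E3) ∉ interior C := by
  intro h
  obtain ⟨ε, hε, hball⟩ := Metric.isOpen_iff.1 isOpen_interior 0 h
  set y : E3 := (ε / 2) • EuclideanSpace.single (0 : Fin 3) (1 : ℝ) with hy
  have hyn : ‖y‖ = ε / 2 := by
    simp [hy, norm_smul, EuclideanSpace.norm_single, abs_of_pos hε]
  have hymem : y ∈ C := interior_subset (hball (by simp [mem_ball, dist_zero_right, hyn]; linarith))
  have hymem' : -y ∈ C := interior_subset (hball (by simp [mem_ball, dist_zero_right, hyn]; linarith))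
  have h0 := hC.pointed y hymem hymem'
  rw [h0] at hyn
  simp at hyn
  linarith

lemma smul_interior (hC : MyCone0 C) {x : E3} {t : ℝ} (ht : 0 < t) (hx : x ∈ interior C) :
    t • x ∈ interior C := by
  have h1 : t • interior C ⊆ interior C := by
    rw [← interior_smul₀ ht.ne' C]
    exact interior_mono (by
      intro z hz
      obtain ⟨u, hu, rfl⟩ := hz
      exact hC.smul_mem u hu t ht.le)
  exact h1 ⟨x, hx, rfl⟩

lemma smul_frontier (hC : MyCone0 C) {x : E3} {t : ℝ} (ht : 0 < t) (hx : x ∈ frontier C) :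
    t • x ∈ frontier C := by
  rw [hC.closed.frontier_eq, mem_diff] at hx ⊢
  refine ⟨hC.smul_mem x hx.1 t ht.le, fun h => hx.2 ?_⟩
  have := hC.smul_interior (inv_pos.2 ht) h
  rwa [inv_smul_smul₀ ht.ne'] at this

lemma exists_dual_functional (hC : MyCone0 C) :
    ∃ (f₀ : E3) (c : ℝ), 0 < c ∧ ∀ x ∈ C, c * ‖x‖ ≤ ⟪x, f₀⟫ := by
  classical
  set K : ConvexCone ℝ (EuclideanSpace ℝ (Fin 3)) :=
    { carrier := C
      smul_mem' := fun {c} hc {x} hx => hC.smul_mem x hx c hc.le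
      add_mem' := by
        intro x hx y hy
        have hmid : (1/2 : ℝ) • x + (1/2 : ℝ) • y ∈ C :=
          hC.conv hx hy (by norm_num) (by norm_num) (by norm_num)
        have h2 := hC.smul_mem _ hmid 2 (by norm_num)
        have : (2:ℝ) • ((1/2 : ℝ) • x + (1/2 : ℝ) • y) = x + y := by
          rw [smul_add, smul_smul, smul_smul]; norm_num
        rwa [this] at h2 } with hK
  have hKcoe : (K : Set E3) = C := rfl
  set Dl : Set E3 := (ProperCone.innerDual C : Set E3) with hDl
  have hKc : IsClosed (K : Set E3) := hC.closed
  have hKne : (K : Set E3).Nonempty := ⟨0, hC.zero_mem⟩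
  have hdd : ((ProperCone.innerDual (ProperCone.innerDual (K : Set E3) : Set E3)) : Set E3) = K := by
    let P : ProperCone ℝ E3 :=
      { carrier := C, add_mem' := fun hx hy => K.add_mem' hx hy, zero_mem' := hC.zero_mem,
        smul_mem' := fun c x hx => hC.smul_mem x hx c c.2, isClosed' := hC.closed }
    exact congrArg (fun Q : ProperCone ℝ E3 => (Q : Set E3)) (ProperCone.innerDual_innerDual P)
  have h0Dl : (0 : E3) ∈ Dl := ZeroMemClass.zero_mem (ProperCone.innerDual C)
  have hspan : Submodule.span ℝ Dl = ⊤ := by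
    rw [← Submodule.orthogonal_eq_bot_iff]
    rw [Submodule.eq_bot_iff]
    intro v hv
    have hv' : ∀ u ∈ Dl, ⟪u, v⟫ = 0 := fun u hu =>
      (Submodule.mem_orthogonal _ v).1 hv u (Submodule.subset_span hu)
    have hvC : v ∈ C := by
      have : v ∈ ProperCone.innerDual Dl := fun ⦃u⦄ hu => (hv' u hu).ge
      rw [← hKcoe]
      rw [← hdd]; exact this
    have hvC' : -v ∈ C := by
      have : -v ∈ ProperCone.innerDual Dl := fun ⦃u⦄ hu => by
        show 0 ≤ ⟪u, -v⟫
        rw [inner_neg_right, hv' u hu, neg_zero]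
      rw [← hKcoe, ← hdd]; exact this
    exact hC.pointed v hvC hvC'
  have hDlconv : Convex ℝ Dl := (ProperCone.innerDual C).convex
  have hint : (interior Dl).Nonempty := by
    rw [Convex.interior_nonempty_iff_affineSpan_eq_top hDlconv]
    rw [AffineSubspace.affineSpan_eq_top_iff_vectorSpan_eq_top_of_nonempty ℝ (EuclideanSpace ℝ (Fin 3)) (EuclideanSpace ℝ (Fin 3)) ⟨0, h0Dl⟩]
    rw [eq_top_iff, ← hspan]
    rw [Submodule.span_le]
    intro x hx
    have := vsub_mem_vectorSpan ℝ hx h0Dl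
    simpa using this
  obtain ⟨f₀, hf₀⟩ := hint
  obtain ⟨ε, hε, hball⟩ := Metric.isOpen_iff.1 isOpen_interior f₀ hf₀
  refine ⟨f₀, ε/2, by linarith, ?_⟩
  intro x hx
  rcases eq_or_ne x 0 with rfl | hx0
  · simp
  · have hxn : 0 < ‖x‖ := norm_pos_iff.2 hx0
    set u : E3 := f₀ - (ε/2) • (‖x‖⁻¹ • x) with hu
    have hudist : dist u f₀ < ε := by
      rw [dist_eq_norm]
      have : ‖u - f₀‖ = ε/2 := by
        rw [hu]
        simp [norm_smul, abs_of_pos hε, abs_of_pos (half_pos hε), norm_smul,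
          abs_of_nonneg (inv_nonneg.2 hxn.le), inv_mul_cancel₀ hxn.ne']
      rw [this]; linarith
    have huDl : u ∈ Dl := interior_subset (hball hudist)
    have hge : 0 ≤ ⟪x, u⟫ := (ProperCone.mem_innerDual.1 huDl) hx
    rw [hu, inner_sub_right, real_inner_smul_right, real_inner_smul_right,
      real_inner_self_eq_norm_sq] at hge
    have : ‖x‖⁻¹ * (‖x‖^2) = ‖x‖ := by field_simp [pow_two]
    rw [this] at hge
    linarith

lemma frontier_preconnected (hC : MyCone0 C) :
    IsPreconnected (frontier C \ {(0:E3)}) := by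
  classical
  obtain ⟨f₀, c, hc, hfc⟩ := hC.exists_dual_functional
  set f : E3 → ℝ := fun z => ⟪z, f₀⟫ with hf
  have hfcont : Continuous f := by
    exact Continuous.inner continuous_id continuous_const
  have hfadd : ∀ z w : E3, f (z + w) = f z + f w := fun z w => inner_add_left z w f₀
  have hfsub : ∀ z w : E3, f (z - w) = f z - f w := fun z w => inner_sub_left z w f₀
  have hfsmul : ∀ (t:ℝ) (z : E3), f (t • z) = t * f z := fun t z => real_inner_smul_left z f₀ t
  have hfpos : ∀ x ∈ C, x ≠ 0 → 0 < f x := fun x hx hx0 =>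
    lt_of_lt_of_le (mul_pos hc (norm_pos_iff.2 hx0)) (hfc x hx)
  have h0i := hC.zero_not_mem_interior
  obtain ⟨e, he⟩ := hC.int_ne
  have heC : e ∈ C := interior_subset he
  have he0 : e ≠ 0 := fun h => h0i (h ▸ he)
  have hfe : 0 < f e := hfpos e heC he0
  set e₁ : E3 := (f e)⁻¹ • e with he₁
  have he₁i : e₁ ∈ interior C := hC.smul_interior (inv_pos.2 hfe) he
  have he₁C : e₁ ∈ C := interior_subset he₁i
  have hfe₁ : f e₁ = 1 := by rw [he₁, hfsmul]; field_simp
  have hf₀ne : f₀ ≠ 0 := by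
    intro h; rw [hf] at hfe₁; rw [h] at hfe₁; simp at hfe₁
  set V : Submodule ℝ (EuclideanSpace ℝ (Fin 3)) := (Submodule.span ℝ ({f₀} : Set E3))ᗮ with hV
  have hmemV : ∀ z : E3, f z = 0 → z ∈ V := by
    intro z hz
    rw [hV, Submodule.mem_orthogonal]
    intro u hu
    obtain ⟨a, rfl⟩ := Submodule.mem_span_singleton.1 hu
    rw [real_inner_smul_left, real_inner_comm]
    have hz' : ⟪z, f₀⟫ = 0 := hz
    rw [hz', mul_zero]
  have hfV : ∀ v : V, f (v : E3) = 0 := by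
    intro v
    have h := (Submodule.mem_orthogonal _ _).1 v.2 f₀ (Submodule.mem_span_singleton_self f₀)
    show ⟪(v : E3), f₀⟫ = 0
    rw [real_inner_comm]; exact h
  -- the section of the cone
  set ι : V → E3 := fun v => e₁ + (v : E3) with hι
  have hιcont : Continuous ι := continuous_const.add continuous_subtype_val
  have hfι : ∀ v : V, f (ι v) = 1 := by
    intro v; rw [hι]; simp only []
    rw [hfadd, hfe₁, hfV, add_zero]
  set D : Set V := ι ⁻¹' C with hD
  have hDclosed : IsClosed D := hC.closed.preimage hιcont
  have hDconv : Convex ℝ D := by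
    intro v hv w hw a b ha hb hab
    show ι (a • v + b • w) ∈ C
    have hsum : a • e₁ + b • e₁ = e₁ := by rw [← add_smul, hab, one_smul]
    have : ι (a • v + b • w) = a • ι v + b • ι w := by
      rw [hι]; simp only [Submodule.coe_add, Submodule.coe_smul]
      rw [smul_add, smul_add]
      nth_rewrite 1 [← hsum]
      abel
    rw [this]
    exact hC.conv hv hw ha hb hab
  have h0D : (0 : V) ∈ interior D := by
    have hsub : ι ⁻¹' (interior C) ⊆ D := preimage_mono interior_subset
    have hopen : IsOpen (ι ⁻¹' (interior C)) := isOpen_interior.preimage hιcont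
    have h0 : (0 : V) ∈ ι ⁻¹' (interior C) := by
      show ι 0 ∈ interior C
      rw [hι]; simpa using he₁i
    exact interior_maximal hsub hopen h0
  have hDbdd : Bornology.IsVonNBounded ℝ D := by
    rw [NormedSpace.isVonNBounded_iff, isBounded_iff_forall_norm_le]
    refine ⟨1/c + ‖e₁‖, ?_⟩
    intro v hv
    have h1 : c * ‖ι v‖ ≤ f (ι v) := hfc _ hv
    rw [hfι] at h1
    have h2 : ‖ι v‖ ≤ 1/c := (le_div_iff₀ hc).2 (by linarith)
    have h3 : ‖(v : E3)‖ ≤ ‖ι v‖ + ‖e₁‖ := by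
      have hveq : (v : E3) = ι v - e₁ := by simp [hι]
      rw [hveq]
      exact norm_sub_le _ _
    have hnv : ‖v‖ = ‖(v : E3)‖ := rfl
    rw [hnv]; linarith
  -- frontier D is preconnected
  have hrank : 1 < Module.rank ℝ V := by
    have h1 : finrank ℝ (Submodule.span ℝ ({f₀} : Set E3)) = 1 := finrank_span_singleton hf₀ne
    have h2 := Submodule.finrank_add_finrank_orthogonal (K := Submodule.span ℝ ({f₀} : Set E3))
    have h3 : finrank ℝ (EuclideanSpace ℝ (Fin 3)) = 3 := finrank_euclideanSpace_fin
    have h4 : finrank ℝ V = 2 := by rw [hV]; omega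
    rw [← finrank_eq_rank, h4]
    exact_mod_cast one_lt_two
  have hpreD : IsPreconnected (frontier D) := by
    obtain ⟨hom, hint', hcl, hfr⟩ := exists_homeomorph_image_eq hDconv ⟨0, h0D⟩ hDbdd
      (convex_closedBall (0:V) 1) (by
        rw [interior_closedBall (0:V) one_ne_zero]
        exact ⟨0, mem_ball_self one_pos⟩)
      (NormedSpace.isVonNBounded_closedBall ℝ V 1)
    have hsph : frontier (closedBall (0:V) 1) = sphere 0 1 := frontier_closedBall 0 one_ne_zero
    have : frontier D = hom.symm '' sphere 0 1 := by
      rw [← hsph, ← hfr]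
      exact (hom.toEquiv.symm_image_image _).symm
    rw [this]
    exact (isPreconnected_sphere hrank 0 1).image _ hom.symm.continuous.continuousOn
  -- slice of the frontier at level 1 equals the image of frontier D
  have hsec : frontier C ∩ {y : E3 | f y = 1} = ι '' frontier D := by
    apply Subset.antisymm
    · rintro y ⟨hyfr, hy1⟩
      have hy1 : f y = 1 := hy1
      have hyfr' := hyfr
      rw [hC.closed.frontier_eq] at hyfr'
      have hyC : y ∈ C := hyfr'.1
      set v : V := ⟨y - e₁, hmemV _ (by rw [hfsub, hy1, hfe₁, sub_self])⟩ with hv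
      have hιv : ι v = y := by rw [hι]; simp [hv]
      refine ⟨v, ?_, hιv⟩
      rw [hDclosed.frontier_eq]
      refine ⟨(by show ι v ∈ C; rw [hιv]; exact hyC), ?_⟩
      intro hvint
      obtain ⟨O, hOopen, hOeq⟩ := isOpen_induced_iff.1 (isOpen_interior (s := D))
      set gmap : E3 → E3 := fun z => (f z)⁻¹ • (z - (f z) • e₁) with hgmap
      set U₀ : Set E3 := f ⁻¹' (Ioi (0:ℝ)) with hU₀def
      have hU₀ : IsOpen U₀ := isOpen_Ioi.preimage hfcont
      have hgmapOn : ContinuousOn gmap U₀ := by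
        apply ContinuousOn.fun_smul
        · exact (hfcont.continuousOn).inv₀ fun z hz => ne_of_gt (by exact hz)
        · exact (continuous_id.sub (hfcont.smul continuous_const)).continuousOn
      have hgmem : ∀ z : E3, gmap z ∈ V := by
        intro z
        apply hmemV
        rw [hgmap]
        simp only []
        rw [hfsmul, hfsub, hfsmul, hfe₁, mul_one, sub_self, mul_zero]
      set W : Set E3 := U₀ ∩ gmap ⁻¹' O with hW
      have hWopen : IsOpen W := hgmapOn.isOpen_inter_preimage hU₀ hOopen
      have hWy : y ∈ W := by
        constructor
        · show (0:ℝ) < f y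
          rw [hy1]; exact one_pos
        · show gmap y ∈ O
          have hgy : gmap y = (v : E3) := by
            show (f y)⁻¹ • (y - f y • e₁) = y - e₁
            rw [hy1]; simp
          rw [hgy]
          rw [← hOeq] at hvint
          exact hvint
      have hWsub : W ⊆ C := by
        rintro z ⟨hz0, hzO⟩
        have hz0 : 0 < f z := hz0
        set vz : V := ⟨gmap z, hgmem z⟩ with hvz
        have hvzint : vz ∈ interior D := by rw [← hOeq]; exact hzO
        have hvzD : vz ∈ D := interior_subset hvzint
        have hvzC : ι vz ∈ C := hvzD
        have heq : ι vz = (f z)⁻¹ • z := by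
          rw [hι]; simp only [hvz]
          rw [hgmap]; simp only []
          rw [smul_sub, smul_smul, inv_mul_cancel₀ (ne_of_gt hz0), one_smul]
          abel
        rw [heq] at hvzC
        have := hC.smul_mem _ hvzC (f z) hz0.le
        rwa [smul_inv_smul₀ (ne_of_gt hz0)] at this
      exact hyfr'.2 (interior_maximal hWsub hWopen hWy)
    · rintro y ⟨v, hvfr, rfl⟩
      rw [hDclosed.frontier_eq] at hvfr
      obtain ⟨hvD, hvnint⟩ := hvfr
      refine ⟨?_, hfι v⟩
      rw [hC.closed.frontier_eq]
      refine ⟨hvD, ?_⟩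
      intro hιint
      apply hvnint
      exact interior_maximal (preimage_mono interior_subset)
        (isOpen_interior.preimage hιcont) hιint
  -- assemble the punctured frontier as a cone over the slice
  have hassemble : frontier C \ {(0:E3)} =
      (fun p : (EuclideanSpace ℝ (Fin 3)) × ℝ => p.2 • p.1) ''
        ((frontier C ∩ {y : E3 | f y = 1}) ×ˢ Ioi (0:ℝ)) := by
    apply Subset.antisymm
    · rintro z ⟨hz, hz0⟩
      have hz0' : z ≠ 0 := fun h => hz0 (by simp [h])
      have hzC : z ∈ C := by
        have := hz; rw [hC.closed.frontier_eq] at this; exact this.1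
      have hfz : 0 < f z := hfpos z hzC hz0'
      refine ⟨((f z)⁻¹ • z, f z), ⟨⟨hC.smul_frontier (inv_pos.2 hfz) hz, ?_⟩, hfz⟩, ?_⟩
      · show f ((f z)⁻¹ • z) = 1
        rw [hfsmul]; field_simp
      · show f z • (f z)⁻¹ • z = z
        rw [smul_inv_smul₀ (ne_of_gt hfz)]
    · rintro z ⟨⟨y, t⟩, ⟨⟨hyfr, hy1⟩, ht⟩, rfl⟩
      have ht : (0:ℝ) < t := ht
      have hy1 : f y = 1 := hy1
      refine ⟨hC.smul_frontier ht hyfr, ?_⟩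
      intro h0
      have h0 : t • y = 0 := h0
      have hf0 : f (t • y) = 0 := by rw [h0, hf]; exact inner_zero_left f₀
      rw [hfsmul, hy1, mul_one] at hf0
      exact (ne_of_gt ht) hf0
  rw [hassemble, hsec]
  apply IsPreconnected.image
  · exact (hpreD.image ι hιcont.continuousOn).prod isPreconnected_Ioi
  · exact (continuous_snd.smul continuous_fst).continuousOn




lemma key {A B : Set (EuclideanSpace ℝ (Fin 3))} (hA : MyCone0 A) (hB : MyCone0 B)
    (hbd : frontier A ∩ frontier B ⊆ {(0:E3)})
    {x a b : E3} (hxA : x ∈ interior A) (hxB : x ∈ B)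
    (ha : a ∈ A) (haB : a ∉ B) (hb : b ∈ B) (hbA : b ∉ A) : False := by
  classical
  obtain ⟨b₀, hb₀⟩ := hB.int_ne
  have hcont : Continuous (fun t : ℝ => x + t • (b₀ - x)) := by fun_prop
  have h0 : (fun t : ℝ => x + t • (b₀ - x)) 0 = x := by simp
  have hev : ∀ᶠ t in nhds (0:ℝ), x + t • (b₀ - x) ∈ interior A := by
    have hca := hcont.continuousAt (x := 0)
    rw [ContinuousAt] at hca
    simp only [zero_smul, add_zero] at hca
    exact hca (isOpen_interior.mem_nhds hxA)
  obtain ⟨δ, hδpos, hδ⟩ := Metric.eventually_nhds_iff.1 hev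
  set t : ℝ := min (δ/2) (1/2) with htdef
  have htpos : 0 < t := lt_min (by linarith) (by norm_num)
  have htlt1 : t < 1 := lt_of_le_of_lt (min_le_right _ _) (by norm_num)
  have htδ : dist t 0 < δ := by
    rw [Real.dist_eq, sub_zero, abs_of_pos htpos]
    exact lt_of_le_of_lt (min_le_left _ _) (by linarith)
  set w : E3 := x + t • (b₀ - x) with hwdef
  have hwA : w ∈ interior A := hδ htδ
  have hwB : w ∈ interior B := by
    have hcombo := Convex.combo_interior_self_mem_interior hB.conv hb₀ hxB htpos
      (by linarith : (0:ℝ) ≤ 1 - t) (by ring)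
    have heq : t • b₀ + (1 - t) • x = w := by
      rw [hwdef, smul_sub, sub_smul, one_smul]
      abel
    rwa [heq] at hcombo
  have hw0 : w ≠ 0 := fun h => hA.zero_not_mem_interior (h ▸ hwA)
  obtain ⟨t₁, ht₁, hpfrB⟩ := exists_frontier_crossing hB.closed haB (interior_subset hwB)
  set p : E3 := a + t₁ • (w - a) with hpdef
  have hpA : p ∈ interior A := by
    have hcombo := Convex.combo_self_interior_mem_interior hA.conv ha hwA
      (by linarith [ht₁.2] : (0:ℝ) ≤ 1 - t₁) ht₁.1 (by ring)
    have heq : (1 - t₁) • a + t₁ • w = p := by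
      rw [hpdef, smul_sub, sub_smul, one_smul]
      abel
    rwa [heq] at hcombo
  obtain ⟨t₂, ht₂, hqfrA⟩ := exists_frontier_crossing hA.closed hbA (interior_subset hwA)
  set q : E3 := b + t₂ • (w - b) with hqdef
  have hqB : q ∈ interior B := by
    have hcombo := Convex.combo_self_interior_mem_interior hB.conv hb hwB
      (by linarith [ht₂.2] : (0:ℝ) ≤ 1 - t₂) ht₂.1 (by ring)
    have heq : (1 - t₂) • b + t₂ • w = q := by
      rw [hqdef, smul_sub, sub_smul, one_smul]
      abel
    rwa [heq] at hcombo
  set Cs : Set (EuclideanSpace ℝ (Fin 3)) := A ∩ B with hCsdef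
  have hCs : MyCone0 Cs :=
    ⟨hA.closed.inter hB.closed, hA.conv.inter hB.conv,
      ⟨w, by rw [hCsdef, interior_inter]; exact ⟨hwA, hwB⟩⟩,
      fun z hz s hs => ⟨hA.smul_mem z hz.1 s hs, hB.smul_mem z hz.2 s hs⟩,
      fun z hz hz' => hA.pointed z hz.1 hz'.1⟩
  have hintCs : interior Cs = interior A ∩ interior B := interior_inter
  have hpB : p ∈ B := by
    have := hpfrB; rw [hB.closed.frontier_eq] at this; exact this.1
  have hpnB : p ∉ interior B := by
    have := hpfrB; rw [hB.closed.frontier_eq] at this; exact this.2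
  have hqA : q ∈ A := by
    have := hqfrA; rw [hA.closed.frontier_eq] at this; exact this.1
  have hqnA : q ∉ interior A := by
    have := hqfrA; rw [hA.closed.frontier_eq] at this; exact this.2
  have hpfr : p ∈ frontier Cs \ {(0:E3)} := by
    constructor
    · rw [hCs.closed.frontier_eq]
      refine ⟨⟨interior_subset hpA, hpB⟩, ?_⟩
      rw [hintCs]
      rintro ⟨_, h2⟩
      exact hpnB h2
    · intro h
      have : p = 0 := h
      exact hA.zero_not_mem_interior (this ▸ hpA)
  have hqfr : q ∈ frontier Cs \ {(0:E3)} := by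
    constructor
    · rw [hCs.closed.frontier_eq]
      refine ⟨⟨hqA, interior_subset hqB⟩, ?_⟩
      rw [hintCs]
      rintro ⟨h1, _⟩
      exact hqnA h1
    · intro h
      have : q = 0 := h
      exact hB.zero_not_mem_interior (this ▸ hqB)
  have hpre := hCs.frontier_preconnected
  have hcover : frontier Cs \ {(0:E3)} ⊆ (frontier A)ᶜ ∪ (frontier B)ᶜ := by
    rintro z ⟨hz, hz0⟩
    by_cases hzA : z ∈ frontier A
    · by_cases hzB : z ∈ frontier B
      · exact absurd (hbd ⟨hzA, hzB⟩) hz0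
      · exact Or.inr hzB
    · exact Or.inl hzA
  have h1 : ((frontier Cs \ {(0:E3)}) ∩ (frontier A)ᶜ).Nonempty := by
    refine ⟨p, hpfr, fun hfa => ?_⟩
    rw [hA.closed.frontier_eq] at hfa
    exact hfa.2 hpA
  have h2 : ((frontier Cs \ {(0:E3)}) ∩ (frontier B)ᶜ).Nonempty := by
    refine ⟨q, hqfr, fun hfb => ?_⟩
    rw [hB.closed.frontier_eq] at hfb
    exact hfb.2 hqB
  obtain ⟨z, hzs, hzu, hzv⟩ := hpre _ _ isClosed_frontier.isOpen_compl
    isClosed_frontier.isOpen_compl hcover h1 h2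
  obtain ⟨hzfr, hz0⟩ := hzs
  have hzCs : z ∈ Cs := by
    have := hzfr; rw [hCs.closed.frontier_eq] at this; exact this.1
  have hznint : z ∉ interior Cs := by
    have := hzfr; rw [hCs.closed.frontier_eq] at this; exact this.2
  rw [hintCs] at hznint
  have : z ∉ interior A ∨ z ∉ interior B := by
    by_contra hcon
    push_neg at hcon
    exact hznint ⟨hcon.1, hcon.2⟩
  rcases this with h | h
  · exact hzu (by rw [hA.closed.frontier_eq]; exact ⟨hzCs.1, h⟩)
  · exact hzv (by rw [hB.closed.frontier_eq]; exact ⟨hzCs.2, h⟩)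

lemma main0 {A B : Set (EuclideanSpace ℝ (Fin 3))} (hA : MyCone0 A) (hB : MyCone0 B)
    (hbd : frontier A ∩ frontier B ⊆ {(0:E3)}) :
    A ⊆ B ∨ B ⊆ A ∨ A ∩ B = {(0:E3)} := by
  by_contra h
  push_neg at h
  obtain ⟨hAB, hBA, hI⟩ := h
  obtain ⟨a, ha, haB⟩ := not_subset.1 hAB
  obtain ⟨b, hb, hbA⟩ := not_subset.1 hBA
  have h0 : (0:E3) ∈ A ∩ B := ⟨hA.zero_mem, hB.zero_mem⟩
  have hex : ∃ x ∈ A ∩ B, x ≠ (0:E3) := by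
    by_contra h'
    push_neg at h'
    apply hI
    apply Subset.antisymm
    · intro z hz
      rcases eq_or_ne z 0 with rfl | hz0
      · exact rfl
      · exact absurd (h' z hz) (by simpa using hz0)
    · intro z hz
      rw [mem_singleton_iff] at hz
      rw [hz]; exact h0
  obtain ⟨x, ⟨hxA, hxB⟩, hx0⟩ := hex
  have hcases : x ∈ interior A ∨ x ∈ interior B := by
    by_contra h'
    push_neg at h'
    have hxfA : x ∈ frontier A := by rw [hA.closed.frontier_eq]; exact ⟨hxA, h'.1⟩
    have hxfB : x ∈ frontier B := by rw [hB.closed.frontier_eq]; exact ⟨hxB, h'.2⟩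
    exact hx0 (hbd ⟨hxfA, hxfB⟩)
  rcases hcases with hx | hx
  · exact key hA hB hbd hx hxB ha haB hb hbA
  · exact key hB hA (fun z hz => hbd ⟨hz.2, hz.1⟩) hx hxA hb hbA ha haB

end MyCone0

/-- A solid cone with apex `o` in `ℝ³`: a closed convex set with nonempty
interior, stable under nonnegative dilations about `o`, and pointed (it
contains no line through `o`: `x` and its reflection `2o - x` both belong to
it only for `x = o`). -/
def IsSolidPointedCone (o : EuclideanSpace ℝ (Fin 3))
    (C : Set (EuclideanSpace ℝ (Fin 3))) : Prop :=
  IsClosed C ∧ Convex ℝ C ∧ (interior C).Nonempty ∧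
    (∀ x ∈ C, ∀ t : ℝ, 0 ≤ t → o + t • (x - o) ∈ C) ∧
    (∀ x ∈ C, (2 : ℝ) • o - x ∈ C → x = o)

lemma IsSolidPointedCone.toMyCone0 {o : EuclideanSpace ℝ (Fin 3)}
    {C : Set (EuclideanSpace ℝ (Fin 3))} (hC : IsSolidPointedCone o C) :
    MyCone0 ((Homeomorph.addRight o) ⁻¹' C) := by
  obtain ⟨hcl, hconv, hint, hcone, hpt⟩ := hC
  have hco : ∀ z : E3, (Homeomorph.addRight o) z = z + o := fun z => rfl
  constructor
  · exact hcl.preimage (Homeomorph.addRight o).continuous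
  · intro u hu v hv s r hs hr hsr
    have hu' : u + o ∈ C := hu
    have hv' : v + o ∈ C := hv
    show s • u + r • v + o ∈ C
    have heq : s • u + r • v + o = s • (u + o) + r • (v + o) := by
      rw [smul_add, smul_add]
      have hsum : s • o + r • o = o := by rw [← add_smul, hsr, one_smul]
      nth_rewrite 1 [← hsum]
      abel
    rw [heq]
    exact hconv hu' hv' hs hr hsr
  · rw [← Homeomorph.preimage_interior]
    obtain ⟨z, hz⟩ := hint
    exact ⟨z - o, by show z - o + o ∈ interior C; simpa using hz⟩
  · intro z hz s hs
    have hz' : z + o ∈ C := hz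
    have := hcone _ hz' s hs
    show s • z + o ∈ C
    have heq : s • z + o = o + s • (z + o - o) := by
      rw [add_sub_cancel_right]
      abel
    rwa [heq]
  · intro z hz hz'
    have h1 : z + o ∈ C := hz
    have h2 : -z + o ∈ C := hz'
    have h3 : (2:ℝ) • o - (z + o) ∈ C := by
      have heq : (2:ℝ) • o - (z + o) = -z + o := by
        rw [two_smul]; abel
      rwa [heq]
    have := hpt _ h1 h3
    have : z + o = o := this
    simpa using this

/-- Two solid pointed closed convex cones in `ℝ³` with the same
apex `o` whose boundaries meet only (at most) at `o` are nested or meet only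
at `o`. -/
theorem cones_with_trivial_boundary_intersection
    (o : EuclideanSpace ℝ (Fin 3)) (A B : Set (EuclideanSpace ℝ (Fin 3)))
    (hA : IsSolidPointedCone o A) (hB : IsSolidPointedCone o B)
    (hbd : frontier A ∩ frontier B ⊆ {o}) :
    A ⊆ B ∨ B ⊆ A ∨ A ∩ B = {o} := by
  classical
  set h : (EuclideanSpace ℝ (Fin 3)) ≃ₜ (EuclideanSpace ℝ (Fin 3)) := Homeomorph.addRight o with hh
  have hbd' : frontier (h ⁻¹' A) ∩ frontier (h ⁻¹' B) ⊆ {(0:E3)} := by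
    intro z hz
    rw [← Homeomorph.preimage_frontier, ← Homeomorph.preimage_frontier] at hz
    have : h z ∈ frontier A ∩ frontier B := hz
    have h1 : h z = o := hbd this
    have h2 : z + o = o := h1
    simpa using h2
  have main := MyCone0.main0 hA.toMyCone0 hB.toMyCone0 hbd'
  have hmem : ∀ (C : Set (EuclideanSpace ℝ (Fin 3))) (z : E3), z ∈ h ⁻¹' C ↔ z + o ∈ C :=
    fun C z => Iff.rfl
  rcases main with hsub | hsub | heq
  · left
    intro z hz
    have : z - o + o ∈ A := by simpa using hz
    have := hsub (show z - o ∈ h ⁻¹' A from this)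
    have : z - o + o ∈ B := this
    simpa using this
  · right; left
    intro z hz
    have : z - o + o ∈ B := by simpa using hz
    have := hsub (show z - o ∈ h ⁻¹' B from this)
    have : z - o + o ∈ A := this
    simpa using this
  · right; right
    ext z
    constructor
    · intro hz
      have hz' : z - o ∈ (h ⁻¹' A) ∩ (h ⁻¹' B) := by
        constructor
        · show z - o + o ∈ A; simpa using hz.1
        · show z - o + o ∈ B; simpa using hz.2
      rw [heq] at hz'
      have : z - o = 0 := hz'
      have : z = o := by
        have := congrArg (fun w => w + o) this
        simpa using this
      simpa using this
    · intro hz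
      rw [mem_singleton_iff] at hz
      rw [hz]
      have h0 : (0:E3) ∈ (h ⁻¹' A) ∩ (h ⁻¹' B) := by rw [heq]; rfl
      have h1 : (0:E3) + o ∈ A := h0.1
      have h2 : (0:E3) + o ∈ B := h0.2
      exact ⟨by simpa using h1, by simpa using h2⟩
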